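/- Fix δ > 0, β ≥ 1 and an integer k ≥ 3, and define Δ_k^n = (n^β − (n−k)^β − 2)^{−δ} − ((n+1)^β − (n−k)^β)^{−δ}. Then Δ_k^{k+1} ≤ 6 · 2^β · 4^δ · β / k^{δβ+1}. -/

import Mathlib

set_option maxHeartbeats 800000

open Real

lemma bern_neg {s δ : ℝ} (hs : 0 ≤ s) (hδ : 0 ≤ δ) : 1 - δ * s ≤ (1 + s) ^ (-δ) := by
  have h1 : (0:ℝ) < 1 + s := by linarith
  rw [Real.rpow_def_of_pos h1]
  have hlog : Real.log (1 + s) ≤ s := by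
    have := Real.log_le_sub_one_of_pos h1
    linarith
  have h2 := Real.add_one_le_exp (Real.log (1 + s) * -δ)
  nlinarith [mul_nonneg hδ (sub_nonneg.mpr hlog)]

lemma mvt_rpow_neg {a b δ : ℝ} (ha : 0 < a) (hab : a ≤ b) (hδ : 0 ≤ δ) :
    a ^ (-δ) - b ^ (-δ) ≤ δ * a ^ (-δ - 1) * (b - a) := by
  set s := (b - a) / a with hs_def
  have hs : 0 ≤ s := div_nonneg (by linarith) ha.le
  have hb : b = a * (1 + s) := by
    rw [hs_def, mul_add, mul_div_assoc', mul_comm a (b - a), mul_div_assoc, div_self ha.ne']; ring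
  have hbpow : b ^ (-δ) = a ^ (-δ) * (1 + s) ^ (-δ) := by
    rw [hb, Real.mul_rpow ha.le (by linarith)]
  have hbern := bern_neg hs hδ
  have hapos : 0 < a ^ (-δ) := Real.rpow_pos_of_pos ha _
  have key : a ^ (-δ) - b ^ (-δ) ≤ a ^ (-δ) * (δ * s) := by
    rw [hbpow]; nlinarith [mul_le_mul_of_nonneg_left hbern hapos.le]
  have h2 : a ^ (-δ) * (δ * s) = δ * a ^ (-δ - 1) * (b - a) := by
    rw [show (-δ - 1) = -δ + (-1) by ring, Real.rpow_add ha, Real.rpow_neg_one, hs_def]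
    field_simp
  linarith [key, h2.le]

lemma aux_delta_pow {δ : ℝ} (hδ : 0 ≤ δ) : δ * 2 ^ δ ≤ 2 * 4 ^ δ := by
  have h2 : (0:ℝ) < 2 ^ δ := Real.rpow_pos_of_pos two_pos δ
  have hexp : 1 + δ * Real.log 2 ≤ 2 ^ δ := by
    rw [Real.rpow_def_of_pos two_pos]
    have := Real.add_one_le_exp (Real.log 2 * δ)
    linarith
  have hlog2 : (0.6931471803:ℝ) < Real.log 2 := Real.log_two_gt_d9
  have hδle : δ ≤ 2 * 2 ^ δ := by nlinarith
  have h4 : (4:ℝ) ^ δ = 2 ^ δ * 2 ^ δ := by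
    rw [show (4:ℝ) = 2 * 2 by norm_num, Real.mul_rpow (by norm_num) (by norm_num)]
  nlinarith

/-- **Lemma (bound on `Δ_k^{k+1}`).** For `δ > 0`, `β ≥ 1` and an integer `k ≥ 3`,
`Δ_k^{k+1} = ((k+1)^β − 3)^{−δ} − ((k+2)^β − 1)^{−δ} ≤ 6 · 2^β · 4^δ · β / k^{δβ+1}`. -/
theorem Delta_initial_bound (δ β : ℝ) (hδ : 0 < δ) (hβ : 1 ≤ β) (k : ℕ) (hk : 3 ≤ k) :
    (((k : ℝ) + 1) ^ β - 3) ^ (-δ) - (((k : ℝ) + 2) ^ β - 1) ^ (-δ)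
      ≤ 6 * 2 ^ β * 4 ^ δ * β / (k : ℝ) ^ (δ * β + 1) := by
  set K : ℝ := (k : ℝ) with hKdef
  have hK : (3:ℝ) ≤ K := by simp only [hKdef]; exact_mod_cast hk
  have hK0 : (0:ℝ) < K := by linarith
  have hb1 : (0:ℝ) ≤ β - 1 := by linarith
  have hkb1 : (1:ℝ) ≤ K ^ (β - 1) := Real.one_le_rpow (by linarith) hb1
  have hKb : K ^ β = K * K ^ (β - 1) := by
    have : β = 1 + (β - 1) := by ring
    rw [this, Real.rpow_one_add' hK0.le (by linarith)]
    ring_nf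
  have hK1b : (K + 1) * K ^ (β - 1) ≤ (K + 1) ^ β := by
    have h1 : (K + 1) ^ β = (K + 1) * (K + 1) ^ (β - 1) := by
      have hb : β = 1 + (β - 1) := by ring
      rw [hb, Real.rpow_one_add' (by positivity) (by linarith)]
      ring_nf
    have h2 : K ^ (β - 1) ≤ (K + 1) ^ (β - 1) :=
      Real.rpow_le_rpow hK0.le (by linarith) hb1
    nlinarith
  set A : ℝ := (K + 1) ^ β - 3 with hAdef
  set B : ℝ := (K + 2) ^ β - 1 with hBdef
  have hA_ge : (K - 2) * K ^ (β - 1) ≤ A := by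
    have : 3 ≤ 3 * K ^ (β - 1) := by linarith
    nlinarith
  have hApos : 0 < A := by nlinarith
  have hAB : A ≤ B := by
    have : (K + 1) ^ β ≤ (K + 2) ^ β := Real.rpow_le_rpow (by linarith) (by linarith) (by linarith)
    simp only [hAdef, hBdef]; linarith
  have hKpos_pow : (0:ℝ) < K ^ (δ * β + 1) := Real.rpow_pos_of_pos hK0 _
  rcases eq_or_lt_of_le hk with hk3 | hk4
  · -- k = 3
    have hK3 : K = 3 := by rw [hKdef, ← hk3]; norm_num
    have hBnn : (0:ℝ) ≤ B := by
      have : (1:ℝ) ≤ (K + 2) ^ β := Real.one_le_rpow (by linarith) (by linarith)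
      simp only [hBdef]; linarith
    have hBpow : (0:ℝ) ≤ B ^ (-δ) := Real.rpow_nonneg hBnn _
    have hA3 : K ^ β / 3 ≤ A := by
      have : K ^ β = 3 * K ^ (β - 1) := by rw [hKb, hK3]
      nlinarith
    have h1 : A ^ (-δ) ≤ (K ^ β / 3) ^ (-δ) :=
      Real.rpow_le_rpow_of_nonpos (by positivity) hA3 (by linarith)
    have h2 : (K ^ β / 3) ^ (-δ) = 3 ^ δ / K ^ (δ * β) := by
      rw [Real.div_rpow (by positivity) (by norm_num), ← Real.rpow_mul hK0.le,
        show β * -δ = -(δ * β) by ring, Real.rpow_neg hK0.le,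
        Real.rpow_neg (by norm_num : (0:ℝ) ≤ 3)]
      have h3pos : (0:ℝ) < 3 ^ δ := Real.rpow_pos_of_pos (by norm_num) δ
      field_simp
    -- now finish: A^(-δ) ≤ 3^δ / K^(δβ) ≤ RHS
    have h34 : (3:ℝ) ^ δ ≤ 4 ^ δ := Real.rpow_le_rpow (by norm_num) (by norm_num) hδ.le
    have h2b : (2:ℝ) ≤ 2 ^ β := by
      have := Real.rpow_le_rpow_of_exponent_le (by norm_num : (1:ℝ) ≤ 2) hβ
      rwa [Real.rpow_one] at this
    have h4pos : (0:ℝ) < 4 ^ δ := Real.rpow_pos_of_pos (by norm_num) δ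
    have hKd : (0:ℝ) < K ^ (δ * β) := Real.rpow_pos_of_pos hK0 _
    have hsplit : K ^ (δ * β + 1) = K ^ (δ * β) * K := by
      rw [Real.rpow_add_one (ne_of_gt hK0)]
    have hfinal : 3 ^ δ / K ^ (δ * β) ≤ 6 * 2 ^ β * 4 ^ δ * β / K ^ (δ * β + 1) := by
      rw [hsplit, div_le_div_iff₀ (by positivity) (by positivity), hK3]
      have hc : 3 * 3 ^ δ ≤ 6 * 2 ^ β * 4 ^ δ * β := by
        have e1 : (2:ℝ) * 4 ^ δ ≤ 2 ^ β * 4 ^ δ := mul_le_mul_of_nonneg_right h2b h4pos.le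
        have e2 : (2:ℝ) ^ β * 4 ^ δ * 1 ≤ 2 ^ β * 4 ^ δ * β :=
          mul_le_mul_of_nonneg_left hβ (by positivity)
        nlinarith
      have hKd3 : (0:ℝ) < 3 ^ (δ * β) := Real.rpow_pos_of_pos (by norm_num) _
      nlinarith [mul_le_mul_of_nonneg_right hc hKd3.le]
    calc A ^ (-δ) - B ^ (-δ) ≤ A ^ (-δ) := by linarith
      _ ≤ 3 ^ δ / K ^ (δ * β) := by rw [← h2]; exact h1
      _ ≤ _ := hfinal
  · -- k ≥ 4
    have hK4 : (4:ℝ) ≤ K := by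
      have : (4:ℕ) ≤ k := hk4
      simp only [hKdef]; exact_mod_cast this
    have hA2 : K ^ β / 2 ≤ A := by
      have h1 : K / 2 * K ^ (β - 1) ≤ (K - 2) * K ^ (β - 1) :=
        mul_le_mul_of_nonneg_right (by linarith) (by positivity)
      rw [hKb]; linarith
    have step1 := mvt_rpow_neg hApos hAB hδ.le
    have step2 : A ^ (-δ - 1) ≤ 2 ^ (δ + 1) * K ^ (β * (-δ - 1)) := by
      have h1 : A ^ (-δ - 1) ≤ (K ^ β / 2) ^ (-δ - 1) :=
        Real.rpow_le_rpow_of_nonpos (by positivity) hA2 (by linarith)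
      have h2 : (K ^ β / 2) ^ (-δ - 1) = 2 ^ (δ + 1) * K ^ (β * (-δ - 1)) := by
        rw [show (-δ - 1 : ℝ) = -(δ + 1) by ring,
          Real.div_rpow (by positivity) (by norm_num), ← Real.rpow_mul hK0.le,
          Real.rpow_neg (by norm_num : (0:ℝ) ≤ 2)]
        field_simp
      linarith [h1, h2.le]
    have step3 : B - A ≤ 3 * β * 2 ^ (β - 1) * K ^ (β - 1) := by
      have hb2 : (0:ℝ) < K + 2 := by linarith
      have hs1 : (-1:ℝ) ≤ -(1/(K+2)) := by
        have : 1/(K+2) ≤ 1 := by rw [div_le_one hb2]; linarith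
        linarith
      have hbern2 := one_add_mul_self_le_rpow_one_add hs1 hβ
      have he : (1:ℝ) + -(1/(K+2)) = (K+1)/(K+2) := by field_simp; ring
      rw [he, Real.div_rpow (by linarith) hb2.le] at hbern2
      have hKb2pos : (0:ℝ) < (K+2)^β := Real.rpow_pos_of_pos hb2 β
      have hsub : (K+2)^(β-1) = (K+2)^β / (K+2) := by
        rw [Real.rpow_sub hb2, Real.rpow_one]
      have hMVT : (K + 2) ^ β - (K + 1) ^ β ≤ β * (K + 2) ^ (β - 1) := by
        have h := mul_le_mul_of_nonneg_right hbern2 hKb2pos.le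
        rw [div_mul_cancel₀ _ (ne_of_gt hKb2pos)] at h
        have h2 : (1 + β * -(1/(K+2))) * (K+2)^β
            = (K+2)^β - β * ((K+2)^β/(K+2)) := by field_simp; ring
        rw [h2] at h
        rw [hsub]
        linarith
      have h2k : (K+2)^(β-1) ≤ 2^(β-1) * K^(β-1) := by
        have h := Real.rpow_le_rpow (by linarith : (0:ℝ) ≤ K+2)
          (by linarith : K+2 ≤ 2*K) hb1
        rwa [Real.mul_rpow (by norm_num) hK0.le] at h
      have h1pow : (1:ℝ) ≤ 2^(β-1) := Real.one_le_rpow one_le_two hb1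
      have hBA : B - A = (K+2)^β - (K+1)^β + 2 := by
        simp only [hAdef, hBdef]; ring
      rw [hBA]
      have h2le : (2:ℝ) ≤ 2*β*K^(β-1) := by nlinarith
      nlinarith [mul_le_mul_of_nonneg_left h2k (by linarith : (0:ℝ) ≤ β),
        mul_nonneg (mul_nonneg (sub_nonneg.mpr h1pow) (by linarith : (0:ℝ) ≤ β))
          (by positivity : (0:ℝ) ≤ K^(β-1))]
    have hBApos : (0:ℝ) ≤ B - A := by linarith
    have step4 : δ * A ^ (-δ - 1) * (B - A)
        ≤ δ * (2 ^ (δ + 1) * K ^ (β * (-δ - 1))) * (3 * β * 2 ^ (β - 1) * K ^ (β - 1)) := by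
      apply mul_le_mul
      · exact mul_le_mul_of_nonneg_left step2 hδ.le
      · exact step3
      · exact hBApos
      · positivity
    have hKcomb : K ^ (β * (-δ - 1)) * K ^ (β - 1) = K ^ (-(δ * β + 1)) := by
      rw [← Real.rpow_add hK0]; congr 1; ring
    have h2split : (2:ℝ) ^ (δ + 1) * 2 ^ (β - 1) = 2 ^ δ * 2 ^ β := by
      rw [← Real.rpow_add two_pos, ← Real.rpow_add two_pos]; congr 1; ring
    have hcoef : 3 * δ * β * (2 ^ δ * 2 ^ β) ≤ 6 * 2 ^ β * 4 ^ δ * β := by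
      have ha := aux_delta_pow hδ.le
      nlinarith [mul_le_mul_of_nonneg_left ha (by positivity : (0:ℝ) ≤ 3 * β * 2 ^ β)]
    have hrhs : 6 * 2 ^ β * 4 ^ δ * β / K ^ (δ * β + 1)
        = 6 * 2 ^ β * 4 ^ δ * β * K ^ (-(δ * β + 1)) := by
      rw [Real.rpow_neg hK0.le, div_eq_mul_inv]
    have hKneg : (0:ℝ) ≤ K ^ (-(δ * β + 1)) := (Real.rpow_pos_of_pos hK0 _).le
    calc A ^ (-δ) - B ^ (-δ)
        ≤ δ * A ^ (-δ - 1) * (B - A) := step1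
      _ ≤ δ * (2 ^ (δ + 1) * K ^ (β * (-δ - 1))) * (3 * β * 2 ^ (β - 1) * K ^ (β - 1)) := step4
      _ = (3 * δ * β * (2 ^ δ * 2 ^ β)) * K ^ (-(δ * β + 1)) := by
          rw [← hKcomb, ← h2split]; ring
      _ ≤ (6 * 2 ^ β * 4 ^ δ * β) * K ^ (-(δ * β + 1)) :=
          mul_le_mul_of_nonneg_right hcoef hKneg
      _ = _ := hrhs.symm
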